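/- Let X be an N×n matrix (n ≥ 2) whose columns are n distinct columns of Φ, and suppose μ_1(n−1) < 1. Then XᵀX is invertible and, for every nonempty Π ⊆ {1,…,n}, ‖((XᵀX)⁻¹)_{Π,:}‖_1 ≤ ‖(XᵀX)⁻¹‖_1 ≤ 1/(1 − μ_1(n−1)). -/

import Mathlib

open Finset Matrix

/-- The cumulative coherence `μ₁(m)` of the dictionary `Φ`. -/
noncomputable def mu1 (N d : ℕ) (Φ : Matrix (Fin N) (Fin d) ℝ) (m : ℕ) : ℝ :=
  ⨆ Λ ∈ {Λ : Finset (Fin d) | Λ.card = m},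
    ⨆ j ∈ Finset.univ \ Λ, ∑ l ∈ Λ, |∑ i, Φ i l * Φ i j|

lemma mu1_ge (N d : ℕ) (Φ : Matrix (Fin N) (Fin d) ℝ) (m : ℕ)
    (Λ : Finset (Fin d)) (hΛ : Λ.card = m) (j : Fin d) (hj : j ∈ Finset.univ \ Λ) :
    (∑ l ∈ Λ, |∑ i, Φ i l * Φ i j|) ≤ mu1 N d Φ m := by
  have h1 : (∑ l ∈ Λ, |∑ i, Φ i l * Φ i j|)
      ≤ ⨆ j ∈ Finset.univ \ Λ, ∑ l ∈ Λ, |∑ i, Φ i l * Φ i j| := by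
    have := le_ciSup
      (f := fun j => ⨆ _ : j ∈ Finset.univ \ Λ, ∑ l ∈ Λ, |∑ i, Φ i l * Φ i j|)
      (Set.Finite.bddAbove (Set.finite_range _)) j
    rwa [ciSup_pos hj] at this
  refine h1.trans ?_
  have := le_ciSup
    (f := fun Λ' : Finset (Fin d) => ⨆ _ : Λ' ∈ {Λ : Finset (Fin d) | Λ.card = m},
      ⨆ j ∈ Finset.univ \ Λ', ∑ l ∈ Λ', |∑ i, Φ i l * Φ i j|)
    (Set.Finite.bddAbove (Set.finite_range _)) Λ
  rw [ciSup_pos (show Λ ∈ {Λ : Finset (Fin d) | Λ.card = m} from hΛ)] at this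
  exact this

attribute [local instance] Matrix.linftyOpNormedRing Matrix.linftyOpNormedAlgebra

/-- If `X` consists of `n ≥ 2` distinct columns of `Φ` and `μ₁(n−1) < 1`, then `XᵀX` is
invertible and, for every nonempty `Π ⊆ {1,…,n}`,
`‖((XᵀX)⁻¹)_{Π,:}‖₁ ≤ ‖(XᵀX)⁻¹‖₁ ≤ 1/(1 − μ₁(n−1))` (with `‖·‖₁` the maximum
absolute column sum). -/
theorem gram_inverse_norm_bound
    (N d n : ℕ) (hn : 2 ≤ n)
    (Φ : Matrix (Fin N) (Fin d) ℝ)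
    (hunit : ∀ j, ∑ i, Φ i j ^ 2 = 1)
    (g : Fin n → Fin d) (hg : Function.Injective g)
    (X : Matrix (Fin N) (Fin n) ℝ) (hX : ∀ i j, X i j = Φ i (g j))
    (hmu : mu1 N d Φ (n - 1) < 1) :
    IsUnit (Xᵀ * X) ∧
      ∀ Pset : Finset (Fin n), Pset.Nonempty →
        (⨆ j : Fin n, ∑ p ∈ Pset, |(Xᵀ * X)⁻¹ p j|) ≤
            (⨆ j : Fin n, ∑ p, |(Xᵀ * X)⁻¹ p j|) ∧
          (⨆ j : Fin n, ∑ p, |(Xᵀ * X)⁻¹ p j|) ≤ 1 / (1 - mu1 N d Φ (n - 1)) := by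
  have hn0 : 0 < n := by omega
  haveI : Nonempty (Fin n) := ⟨⟨0, hn0⟩⟩
  haveI : CompleteSpace (Matrix (Fin n) (Fin n) ℝ) :=
    FiniteDimensional.complete ℝ (Matrix (Fin n) (Fin n) ℝ)
  set μ := mu1 N d Φ (n - 1) with hμdef
  set G := Xᵀ * X with hGdef
  have hGapp : ∀ p q, G p q = ∑ i, Φ i (g p) * Φ i (g q) := by
    intro p q
    simp [hGdef, Matrix.mul_apply, Matrix.transpose_apply, hX]
  have hGsym : ∀ p q, G p q = G q p := by
    intro p q
    rw [hGapp, hGapp]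
    exact Finset.sum_congr rfl fun i _ => mul_comm _ _
  have hGdiag : ∀ p, G p p = 1 := by
    intro p
    rw [hGapp]
    rw [← hunit (g p)]
    exact Finset.sum_congr rfl fun i _ => (sq (Φ i (g p))).symm
  -- the row sums of the off-diagonal part are bounded by μ
  have hrow : ∀ p : Fin n, ∑ q ∈ Finset.univ.erase p, |G p q| ≤ μ := by
    intro p
    have hcard : ((Finset.univ.erase p).image g).card = n - 1 := by
      rw [Finset.card_image_of_injective _ hg, Finset.card_erase_of_mem (Finset.mem_univ p),
        Finset.card_univ, Fintype.card_fin]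
    have hmem : g p ∈ Finset.univ \ (Finset.univ.erase p).image g := by
      simp only [Finset.mem_sdiff, Finset.mem_univ, true_and, Finset.mem_image]
      rintro ⟨q, hq, hgq⟩
      exact (Finset.mem_erase.mp hq).1 (hg hgq)
    have := mu1_ge N d Φ (n - 1) _ hcard (g p) hmem
    rw [Finset.sum_image (fun a _ b _ h => hg h)] at this
    refine le_trans (le_of_eq ?_) this
    refine Finset.sum_congr rfl fun q _ => ?_
    rw [hGapp]
    congr 1
    exact Finset.sum_congr rfl fun i _ => mul_comm _ _
  have hμ0 : 0 ≤ μ := le_trans (Finset.sum_nonneg fun q _ => abs_nonneg _)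
    (hrow ⟨0, hn0⟩)
  -- A = G - 1 has row sums bounded by μ
  set A := G - 1 with hAdef
  have hArow : ∀ p : Fin n, ∑ q, |A p q| ≤ μ := by
    intro p
    have : ∑ q, |A p q| = ∑ q ∈ Finset.univ.erase p, |G p q| := by
      rw [← Finset.add_sum_erase _ _ (Finset.mem_univ p)]
      have h1 : |A p p| = 0 := by
        simp [hAdef, Matrix.sub_apply, Matrix.one_apply, hGdiag p]
      rw [h1, zero_add]
      refine Finset.sum_congr rfl fun q hq => ?_
      have : A p q = G p q := by
        simp [hAdef, Matrix.sub_apply, Matrix.one_apply,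
          (Finset.mem_erase.mp hq).1.symm]
      rw [this]
    rw [this]
    exact hrow p
  have hnormA : ‖A‖ ≤ μ := by
    rw [Matrix.linfty_opNorm_def]
    have : (Finset.univ.sup fun i : Fin n => ∑ j, ‖A i j‖₊) ≤ (⟨μ, hμ0⟩ : NNReal) := by
      apply Finset.sup_le
      intro i _
      apply NNReal.coe_le_coe.mp
      push_cast
      exact (by simpa [Real.norm_eq_abs] using hArow i : ∑ x, |A i x| ≤ μ)
    exact_mod_cast this
  have hnormA1 : ‖A‖ < 1 := lt_of_le_of_lt hnormA hmu
  have hnormnegA : ‖-A‖ < 1 := by rwa [norm_neg]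
  have hG1A : G = 1 - (-A) := by
    rw [hAdef, sub_neg_eq_add]; abel
  have hGunit : IsUnit G := by
    rw [hG1A]
    exact isUnit_one_sub_of_norm_lt_one hnormnegA
  refine ⟨hGunit, ?_⟩
  -- bound on the norm of the inverse
  have hinv_eq : G⁻¹ = ∑' i : ℕ, (-A) ^ i := by
    rw [Matrix.nonsing_inv_eq_ringInverse, hG1A,
      ← geom_series_eq_inverse (-A) hnormnegA]
    rfl
  have hinvnorm : ‖G⁻¹‖ ≤ (1 - ‖-A‖)⁻¹ := by
    rw [hinv_eq]
    have := tsum_geometric_le_of_norm_lt_one (-A) hnormnegA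
    rwa [norm_one, sub_self, zero_add] at this
  have h1μpos : 0 < 1 - μ := by linarith
  have hinvnorm' : ‖G⁻¹‖ ≤ 1 / (1 - μ) := by
    rw [one_div]
    refine hinvnorm.trans ?_
    rw [norm_neg]
    apply inv_anti₀ h1μpos
    linarith [hnormA]
  -- column sums of G⁻¹ are bounded by ‖G⁻¹‖ (using symmetry of G⁻¹)
  have hGTsym : Gᵀ = G := by
    ext p q; exact hGsym q p
  have hGinvsym : ∀ p q, G⁻¹ p q = G⁻¹ q p := by
    intro p q
    have : (G⁻¹)ᵀ = G⁻¹ := by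
      rw [Matrix.transpose_nonsing_inv, hGTsym]
    conv_lhs => rw [← this]
    rfl
  have hcol : ∀ j : Fin n, ∑ p, |G⁻¹ p j| ≤ 1 / (1 - μ) := by
    intro j
    have h1 : ∑ p, |G⁻¹ p j| = ∑ p, |G⁻¹ j p| :=
      Finset.sum_congr rfl fun p _ => by rw [hGinvsym]
    have h2 : ∑ p, |G⁻¹ j p| ≤ ‖G⁻¹‖ := by
      rw [Matrix.linfty_opNorm_def]
      have : (∑ p, ‖G⁻¹ j p‖₊) ≤ Finset.univ.sup fun i : Fin n => ∑ p, ‖G⁻¹ i p‖₊ :=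
        Finset.le_sup (f := fun i : Fin n => ∑ p, ‖G⁻¹ i p‖₊) (Finset.mem_univ j)
      calc ∑ p, |G⁻¹ j p| = ((∑ p, ‖G⁻¹ j p‖₊ : NNReal) : ℝ) := by
            push_cast; simp [Real.norm_eq_abs]
        _ ≤ _ := by exact_mod_cast this
    rw [h1]
    exact h2.trans hinvnorm'
  intro Pset _
  constructor
  · apply ciSup_le
    intro j
    refine le_trans (Finset.sum_le_sum_of_subset_of_nonneg (Finset.subset_univ Pset)
      fun p _ _ => abs_nonneg _) ?_
    exact le_ciSup (f := fun j : Fin n => ∑ p, |G⁻¹ p j|) (Set.Finite.bddAbove (Set.finite_range _)) j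
  · exact ciSup_le hcol
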